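/- Fix d, A, n ∈ ℕ and B > 0. Let 𝒳 ⊂ ℝ^{d×A} denote the set of d × A real matrices all of whose columns have ℓ_∞ norm at most 1. For θ ∈ ℝ^d and X ∈ 𝒳, with X_a ∈ ℝ^d denoting the a-th column of X, define f_θ(X) := min{ 0, min_{a∈[A]} ⟨X_a, θ⟩ }, and let ℱ_{d,B} := { f_θ : θ ∈ ℝ^d, ‖θ‖₁ ≤ B }. Then the Rademacher complexity satisfies R_n(ℱ_{d,B}) ≤ A·B·√(π·log(2d)/n). -/

import Mathlib

open MeasureTheory
open scoped ENNReal

noncomputable section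

/-- The uniform distribution on `{-1, +1} ⊆ ℝ`. -/
def signMeasure : Measure ℝ :=
  (2 : ℝ≥0∞)⁻¹ • Measure.dirac (-1) + (2 : ℝ≥0∞)⁻¹ • Measure.dirac 1

/-- The distribution of `n` i.i.d. uniform signs. -/
def signPi (n : ℕ) : Measure (Fin n → ℝ) := Measure.pi fun _ => signMeasure

def sgn (b : Bool) : ℝ := if b then 1 else -1

instance : IsProbabilityMeasure signMeasure := by
  constructor
  simp [signMeasure]
  rw [ENNReal.inv_two_add_inv_two]

lemma signPi_eq (n : ℕ) :
    signPi n = (2 ^ n : ℝ≥0∞)⁻¹ • ∑ s : Fin n → Bool, Measure.dirac (fun i => sgn (s i)) := by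
  rw [signPi]; refine Measure.pi_eq fun S hS => ?_
  rw [Measure.smul_apply, Measure.finset_sum_apply]
  have : ∀ s : Fin n → Bool, Measure.dirac (fun i => sgn (s i)) (Set.pi Set.univ S)
      = ∏ i, (Set.indicator (S i) (fun _ => (1:ℝ≥0∞)) (sgn (s i))) := by
    intro s
    rw [Measure.dirac_apply' _ (MeasurableSet.univ_pi hS)]
    classical
    by_cases h : (fun i => sgn (s i)) ∈ Set.pi Set.univ S
    · rw [Set.indicator_of_mem h]
      exact (Finset.prod_eq_one fun i _ => Set.indicator_of_mem (h i (Set.mem_univ i)) _).symm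
    · rw [Set.indicator_of_notMem h]
      simp only [Set.mem_pi, Set.mem_univ, forall_true_left, not_forall] at h
      obtain ⟨i, hi⟩ := h
      refine (Finset.prod_eq_zero (Finset.mem_univ i) ?_).symm
      simp [Set.indicator_of_notMem (by simpa using hi)]
  simp_rw [this]
  have hsm : ∀ i, signMeasure (S i)
      = ∑ b : Bool, (2:ℝ≥0∞)⁻¹ * (S i).indicator (fun _ => (1:ℝ≥0∞)) (sgn b) := by
    intro i
    rw [Fintype.sum_bool]
    simp only [signMeasure, Measure.coe_add, Measure.coe_smul, Pi.add_apply, Pi.smul_apply,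
      Measure.dirac_apply' _ (hS i), smul_eq_mul, sgn]
    norm_num
    rw [add_comm]
    rfl
  simp_rw [hsm]
  rw [Finset.prod_univ_sum]
  rw [Fintype.piFinset_univ]
  rw [smul_eq_mul, Finset.mul_sum]
  refine (Finset.sum_congr rfl fun x _ => ?_).symm
  rw [Finset.prod_mul_distrib, Finset.prod_const, ← ENNReal.inv_pow]
  simp

lemma integrable_dirac' {α : Type*} [MeasurableSpace α] [MeasurableSingletonClass α]
    (f : α → ℝ) (a : α) : Integrable f (Measure.dirac a) := by
  have h : f =ᵐ[Measure.dirac a] fun _ => f a := by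
    rw [MeasureTheory.ae_dirac_eq]
    exact Filter.eventually_pure.2 rfl
  exact (integrable_const (f a)).congr h.symm

lemma integral_signPi (n : ℕ) (F : (Fin n → ℝ) → ℝ) :
    ∫ ε, F ε ∂signPi n = (2 ^ n : ℝ)⁻¹ * ∑ s : Fin n → Bool, F (fun i => sgn (s i)) := by
  rw [signPi_eq, integral_smul_measure, integral_finset_sum_measure
    (fun s _ => integrable_dirac' F _)]
  simp_rw [integral_dirac]
  rw [smul_eq_mul]
  congr 1
  simp [ENNReal.toReal_inv]


lemma abs_sgn (b : Bool) : |sgn b| = 1 := by cases b <;> simp [sgn]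

lemma sgn_not (b : Bool) : sgn (!b) = -(sgn b) := by cases b <;> simp [sgn]

/-- expected sup of signed sums (unnormalized) -/
def Es {n : ℕ} {ι : Sort*} (w : ι → Fin n → ℝ) : ℝ :=
  ∑ s : Fin n → Bool, ⨆ θ, ∑ i, sgn (s i) * w θ i

section core
variable {n : ℕ} {ι : Type*} [Nonempty ι]

lemma bdd_range {w : ι → Fin n → ℝ} {C : ℝ} (hC : ∀ θ i, |w θ i| ≤ C)
    (ε : Fin n → ℝ) (hε : ∀ i, |ε i| ≤ 1) :
    BddAbove (Set.range fun θ : ι => ∑ i, ε i * w θ i) := by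
  refine ⟨(n : ℝ) * C, ?_⟩
  rintro _ ⟨θ, rfl⟩
  calc ∑ i, ε i * w θ i ≤ ∑ _i : Fin n, C := by
        refine Finset.sum_le_sum fun i _ => ?_
        calc ε i * w θ i ≤ |ε i * w θ i| := le_abs_self _
          _ = |ε i| * |w θ i| := abs_mul _ _
          _ ≤ 1 * C := by
              have h0 : (0:ℝ) ≤ |w θ i| := abs_nonneg _
              exact mul_le_mul (hε i) (hC θ i) h0 zero_le_one
          _ = C := one_mul C
    _ = (n : ℝ) * C := by simp [Finset.sum_const, mul_comm]

lemma scalar_step (a p q : ι → ℝ)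
    (hq1 : BddAbove (Set.range fun θ => a θ + q θ))
    (hq2 : BddAbove (Set.range fun θ => a θ - q θ))
    (h : ∀ θ₁ θ₂, p θ₁ - p θ₂ ≤ |q θ₁ - q θ₂|) :
    (⨆ θ, a θ + p θ) + (⨆ θ, a θ - p θ) ≤ (⨆ θ, a θ + q θ) + (⨆ θ, a θ - q θ) := by
  set R := (⨆ θ, a θ + q θ) + (⨆ θ, a θ - q θ) with hR
  have key : ∀ θ₁ θ₂, (a θ₁ + p θ₁) + (a θ₂ - p θ₂) ≤ R := by
    intro θ₁ θ₂
    have hpq := h θ₁ θ₂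
    rcases le_total (q θ₂) (q θ₁) with hq | hq
    · have h1 : a θ₁ + q θ₁ ≤ ⨆ θ, a θ + q θ := le_ciSup hq1 θ₁
      have h2 : a θ₂ - q θ₂ ≤ ⨆ θ, a θ - q θ := le_ciSup hq2 θ₂
      have habs : |q θ₁ - q θ₂| = q θ₁ - q θ₂ := abs_of_nonneg (by linarith)
      rw [habs] at hpq; rw [hR]; linarith
    · have h1 : a θ₂ + q θ₂ ≤ ⨆ θ, a θ + q θ := le_ciSup hq1 θ₂
      have h2 : a θ₁ - q θ₁ ≤ ⨆ θ, a θ - q θ := le_ciSup hq2 θ₁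
      have habs : |q θ₁ - q θ₂| = q θ₂ - q θ₁ := by
        rw [abs_of_nonpos (by linarith)]; ring
      rw [habs] at hpq; rw [hR]; linarith
  have h2 : ∀ θ₁, (⨆ θ, a θ - p θ) ≤ R - (a θ₁ + p θ₁) := fun θ₁ =>
    ciSup_le fun θ₂ => by linarith [key θ₁ θ₂]
  have h3 : (⨆ θ, a θ + p θ) ≤ R - (⨆ θ, a θ - p θ) :=
    ciSup_le fun θ₁ => by linarith [h2 θ₁]
  linarith
end core

section core2
variable {n : ℕ} {ι : Type*} [Nonempty ι]

lemma step_lemma (u v : ι → Fin n → ℝ) (C : ℝ) (hC0 : 0 ≤ C)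
    (hu : ∀ θ i, |u θ i| ≤ C) (hv : ∀ θ i, |v θ i| ≤ C)
    (hL : ∀ i θ₁ θ₂, |u θ₁ i - u θ₂ i| ≤ |v θ₁ i - v θ₂ i|)
    (K : Finset (Fin n)) (j : Fin n) (hj : j ∉ K) :
    ∑ s : Fin n → Bool, (⨆ θ, ∑ i, sgn (s i) * (if i ∈ K then v θ i else u θ i))
      ≤ ∑ s : Fin n → Bool,
        (⨆ θ, ∑ i, sgn (s i) * (if i ∈ insert j K then v θ i else u θ i)) := by
  classical
  set e := Equiv.piSplitAt j (fun _ : Fin n => Bool) with he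
  have hsum : ∀ G : (Fin n → Bool) → ℝ,
      ∑ s : Fin n → Bool, G s
        = ∑ r, (G (e.symm (true, r)) + G (e.symm (false, r))) := by
    intro G
    rw [← Equiv.sum_comp e.symm G, Fintype.sum_prod_type, Fintype.sum_bool]
    rw [← Finset.sum_add_distrib]
  rw [hsum, hsum]
  refine Finset.sum_le_sum fun r _ => ?_
  have hpt : ∀ (b : Bool) (i : Fin n), e.symm (b, r) i = if h : i = j then b else r ⟨i, h⟩ := by
    intro b i
    simp [he, Equiv.piSplitAt]
  have hptj : ∀ b : Bool, e.symm (b, r) j = b := fun b => by simp [hpt]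
  have hptne : ∀ (b b' : Bool) (i : Fin n), i ≠ j → e.symm (b, r) i = e.symm (b', r) i := by
    intro b b' i hij
    rw [hpt, hpt, dif_neg hij, dif_neg hij]
  set a : ι → ℝ := fun θ =>
    ∑ i ∈ Finset.univ.erase j, sgn (e.symm (true, r) i) * (if i ∈ K then v θ i else u θ i)
    with ha
  have hmix : ∀ (θ : ι) (i : Fin n), i ≠ j →
      (if i ∈ K then v θ i else u θ i) = (if i ∈ insert j K then v θ i else u θ i) := by
    intro θ i hij
    by_cases hK : i ∈ K
    · rw [if_pos hK, if_pos (Finset.mem_insert_of_mem hK)]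
    · rw [if_neg hK, if_neg (by simp [Finset.mem_insert, hij, hK])]
  have e1 : (fun θ : ι => ∑ i, sgn (e.symm (true, r) i) * (if i ∈ K then v θ i else u θ i))
      = fun θ => a θ + u θ j := by
    funext θ
    rw [← Finset.sum_erase_add _ _ (Finset.mem_univ j), hptj]
    simp [sgn, if_neg hj, ha]
  have e2 : (fun θ : ι => ∑ i, sgn (e.symm (false, r) i) * (if i ∈ K then v θ i else u θ i))
      = fun θ => a θ - u θ j := by
    funext θ
    rw [← Finset.sum_erase_add _ _ (Finset.mem_univ j), hptj]
    have hc : ∀ i ∈ Finset.univ.erase j,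
        sgn (e.symm (false, r) i) * (if i ∈ K then v θ i else u θ i)
          = sgn (e.symm (true, r) i) * (if i ∈ K then v θ i else u θ i) := fun i hi => by
      rw [hptne false true i (Finset.ne_of_mem_erase hi)]
    rw [Finset.sum_congr rfl hc]
    simp [sgn, if_neg hj, ha, sub_eq_add_neg]
  have e3 : (fun θ : ι => ∑ i, sgn (e.symm (true, r) i) * (if i ∈ insert j K then v θ i else u θ i))
      = fun θ => a θ + v θ j := by
    funext θ
    rw [← Finset.sum_erase_add _ _ (Finset.mem_univ j), hptj]
    have hc : ∀ i ∈ Finset.univ.erase j,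
        sgn (e.symm (true, r) i) * (if i ∈ insert j K then v θ i else u θ i)
          = sgn (e.symm (true, r) i) * (if i ∈ K then v θ i else u θ i) := fun i hi => by
      rw [← hmix θ i (Finset.ne_of_mem_erase hi)]
    rw [Finset.sum_congr rfl hc]
    simp [sgn, Finset.mem_insert_self, ha]
  have e4 : (fun θ : ι => ∑ i, sgn (e.symm (false, r) i) * (if i ∈ insert j K then v θ i else u θ i))
      = fun θ => a θ - v θ j := by
    funext θ
    rw [← Finset.sum_erase_add _ _ (Finset.mem_univ j), hptj]
    have hc : ∀ i ∈ Finset.univ.erase j,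
        sgn (e.symm (false, r) i) * (if i ∈ insert j K then v θ i else u θ i)
          = sgn (e.symm (true, r) i) * (if i ∈ K then v θ i else u θ i) := fun i hi => by
      rw [hptne false true i (Finset.ne_of_mem_erase hi),
        ← hmix θ i (Finset.ne_of_mem_erase hi)]
    rw [Finset.sum_congr rfl hc]
    simp [sgn, Finset.mem_insert_self, ha, sub_eq_add_neg]
  simp only [e1, e2, e3, e4]
  have haC : ∀ θ, a θ ≤ (n : ℝ) * C := by
    intro θ
    rw [ha]
    calc ∑ i ∈ Finset.univ.erase j, sgn (e.symm (true, r) i) * (if i ∈ K then v θ i else u θ i)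
        ≤ ∑ _i ∈ Finset.univ.erase j, C := by
          refine Finset.sum_le_sum fun i _ => ?_
          have hb : |(if i ∈ K then v θ i else u θ i)| ≤ C := by
            by_cases hK : i ∈ K
            · rw [if_pos hK]; exact hv θ i
            · rw [if_neg hK]; exact hu θ i
          calc sgn (e.symm (true, r) i) * (if i ∈ K then v θ i else u θ i)
              ≤ |sgn (e.symm (true, r) i) * (if i ∈ K then v θ i else u θ i)| := le_abs_self _
            _ = |sgn (e.symm (true, r) i)| * |(if i ∈ K then v θ i else u θ i)| := abs_mul _ _
            _ ≤ C := by simpa [abs_sgn] using hb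
      _ ≤ (n : ℝ) * C := by
          rw [Finset.sum_const, nsmul_eq_mul]
          have hcard : ((Finset.univ.erase j).card : ℝ) ≤ (n : ℝ) := by
            have h1 := Finset.card_erase_le (a := j) (s := (Finset.univ : Finset (Fin n)))
            exact_mod_cast h1.trans (by simp)
          exact mul_le_mul_of_nonneg_right hcard hC0
  have hb1 : BddAbove (Set.range fun θ => a θ + v θ j) := by
    refine ⟨(n : ℝ) * C + C, ?_⟩
    rintro _ ⟨θ, rfl⟩
    have h1 := (abs_le.1 (hv θ j)).2
    have h2 := haC θ
    dsimp only; linarith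
  have hb2 : BddAbove (Set.range fun θ => a θ - v θ j) := by
    refine ⟨(n : ℝ) * C + C, ?_⟩
    rintro _ ⟨θ, rfl⟩
    have h1 := (abs_le.1 (hv θ j)).1
    have h2 := haC θ
    dsimp only; linarith
  exact scalar_step a (fun θ => u θ j) (fun θ => v θ j) hb1 hb2
    (fun θ₁ θ₂ => (le_abs_self _).trans (hL j θ₁ θ₂))

lemma contraction (u v : ι → Fin n → ℝ) (C : ℝ) (hC0 : 0 ≤ C)
    (hu : ∀ θ i, |u θ i| ≤ C) (hv : ∀ θ i, |v θ i| ≤ C)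
    (hL : ∀ i θ₁ θ₂, |u θ₁ i - u θ₂ i| ≤ |v θ₁ i - v θ₂ i|) :
    Es u ≤ Es v := by
  classical
  have main : ∀ K : Finset (Fin n),
      Es u ≤ ∑ s : Fin n → Bool, (⨆ θ, ∑ i, sgn (s i) * (if i ∈ K then v θ i else u θ i)) := by
    intro K
    induction K using Finset.induction_on with
    | empty => simp [Es]
    | insert j K hj ih => exact ih.trans (step_lemma u v C hC0 hu hv hL _ _ hj)
  have h := main Finset.univ
  simpa [Es] using h
end core2

section core3
variable {n : ℕ} {ι : Type*} [Nonempty ι]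

lemma min_eq_half (a b : ℝ) : min a b = (a + b) / 2 - |a - b| / 2 := by
  rcases le_total a b with h | h
  · rw [min_eq_left h, abs_of_nonpos (by linarith)]; ring
  · rw [min_eq_right h, abs_of_nonneg (by linarith)]; ring

lemma sum_sgn_neg (F : (Fin n → ℝ) → ℝ) :
    ∑ s : Fin n → Bool, F (fun i => -(sgn (s i))) = ∑ s : Fin n → Bool, F (fun i => sgn (s i)) := by
  have hinv : Function.Involutive (fun s : Fin n → Bool => fun i => !(s i)) := by
    intro s; funext i; simp
  refine Fintype.sum_bijective _ hinv.bijective _ _ fun s => ?_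
  congr 1
  funext i
  rw [sgn_not]

lemma Es_neg (w : ι → Fin n → ℝ) : Es (fun θ i => -(w θ i)) = Es w := by
  unfold Es
  have h1 : ∀ s : Fin n → Bool,
      (⨆ θ, ∑ i, sgn (s i) * -(w θ i)) = ⨆ θ, ∑ i, (-(sgn (s i))) * w θ i := by
    intro s
    congr 1
    funext θ
    simp only [mul_neg, neg_mul]
  simp_rw [h1]
  exact sum_sgn_neg (fun ε => ⨆ θ, ∑ i, ε i * w θ i)

lemma ciSup_add_le' (f g : ι → ℝ) (hf : BddAbove (Set.range f)) (hg : BddAbove (Set.range g)) :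
    (⨆ θ, (f θ + g θ)) ≤ (⨆ θ, f θ) + ⨆ θ, g θ :=
  ciSup_le fun θ => add_le_add (le_ciSup hf θ) (le_ciSup hg θ)

lemma Es_half_add (u v : ι → Fin n → ℝ) (C : ℝ) (hC0 : 0 ≤ C)
    (hu : ∀ θ i, |u θ i| ≤ C) (hv : ∀ θ i, |v θ i| ≤ C) :
    Es (fun θ i => (u θ i + v θ i) / 2) ≤ Es u / 2 + Es v / 2 := by
  unfold Es
  rw [Finset.sum_div, Finset.sum_div, ← Finset.sum_add_distrib]
  refine Finset.sum_le_sum fun s _ => ?_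
  have hsg : ∀ i : Fin n, |sgn (s i)| ≤ 1 := fun i => le_of_eq (abs_sgn _)
  refine ciSup_le fun θ => ?_
  have h1 := le_ciSup (bdd_range hu (fun i => sgn (s i)) hsg) θ
  have h2 := le_ciSup (bdd_range hv (fun i => sgn (s i)) hsg) θ
  have h3 : ∑ i, sgn (s i) * ((u θ i + v θ i) / 2)
      = (∑ i, sgn (s i) * u θ i) / 2 + (∑ i, sgn (s i) * v θ i) / 2 := by
    rw [← add_div, ← Finset.sum_add_distrib, eq_div_iff (by norm_num : (2:ℝ) ≠ 0),
      Finset.sum_mul]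
    refine Finset.sum_congr rfl fun i _ => by ring
  rw [h3]
  linarith

lemma Es_min (u v : ι → Fin n → ℝ) (C : ℝ) (hC0 : 0 ≤ C)
    (hu : ∀ θ i, |u θ i| ≤ C) (hv : ∀ θ i, |v θ i| ≤ C) :
    Es (fun θ i => min (u θ i) (v θ i)) ≤ Es u + Es v := by
  set P : ι → Fin n → ℝ := fun θ i => (u θ i + v θ i) / 2 with hP
  set M : ι → Fin n → ℝ := fun θ i => |u θ i - v θ i| / 2 with hM
  set D : ι → Fin n → ℝ := fun θ i => (u θ i + -(v θ i)) / 2 with hD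
  have hPb : ∀ θ i, |P θ i| ≤ C := by
    intro θ i
    rw [hP]
    have := abs_add_le (u θ i) (v θ i)
    have h1 := hu θ i; have h2 := hv θ i
    rw [abs_div]
    simp only [abs_two]
    rw [div_le_iff₀ (by norm_num : (0:ℝ) < 2)]
    calc |u θ i + v θ i| ≤ |u θ i| + |v θ i| := abs_add_le _ _
      _ ≤ C * 2 := by linarith
  have hMb : ∀ θ i, |M θ i| ≤ C := by
    intro θ i
    rw [hM, abs_div]
    simp only [abs_abs, abs_two]
    rw [div_le_iff₀ (by norm_num : (0:ℝ) < 2)]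
    calc |u θ i - v θ i| ≤ |u θ i| + |v θ i| := abs_sub _ _
      _ ≤ C * 2 := by linarith [hu θ i, hv θ i]
  have hDb : ∀ θ i, |D θ i| ≤ C := by
    intro θ i
    rw [hD, abs_div]
    simp only [abs_two]
    rw [div_le_iff₀ (by norm_num : (0:ℝ) < 2)]
    calc |u θ i + -(v θ i)| ≤ |u θ i| + |v θ i| := by
          simpa [sub_eq_add_neg] using abs_sub (u θ i) (v θ i)
      _ ≤ C * 2 := by linarith [hu θ i, hv θ i]
  have hvb : ∀ θ i, |-(v θ i)| ≤ C := by intro θ i; rw [abs_neg]; exact hv θ i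
  -- step 1 : split min
  have step1 : Es (fun θ i => min (u θ i) (v θ i)) ≤ Es P + Es (fun θ i => -(M θ i)) := by
    unfold Es
    rw [← Finset.sum_add_distrib]
    refine Finset.sum_le_sum fun s _ => ?_
    have hsg : ∀ i : Fin n, |sgn (s i)| ≤ 1 := fun i => le_of_eq (abs_sgn _)
    have hMb' : ∀ θ i, |-(M θ i)| ≤ C := by intro θ i; rw [abs_neg]; exact hMb θ i
    have hsplit : (fun θ : ι => ∑ i, sgn (s i) * min (u θ i) (v θ i))
        = fun θ => (∑ i, sgn (s i) * P θ i) + ∑ i, sgn (s i) * (-(M θ i)) := by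
      funext θ
      rw [← Finset.sum_add_distrib]
      refine Finset.sum_congr rfl fun i _ => ?_
      rw [hP, hM, min_eq_half (u θ i) (v θ i)]
      ring
    rw [hsplit]
    exact ciSup_add_le' _ _ (bdd_range hPb _ hsg) (bdd_range hMb' _ hsg)
  have step2 : Es P ≤ Es u / 2 + Es v / 2 := Es_half_add u v C hC0 hu hv
  have step3 : Es (fun θ i => -(M θ i)) = Es M := Es_neg M
  have step4 : Es M ≤ Es D := by
    refine contraction M D C hC0 hMb hDb fun i θ₁ θ₂ => ?_
    rw [hM, hD]
    have h := abs_abs_sub_abs_le_abs_sub (u θ₁ i - v θ₁ i) (u θ₂ i - v θ₂ i)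
    have heq : (u θ₁ i + -v θ₁ i) / 2 - (u θ₂ i + -v θ₂ i) / 2
        = ((u θ₁ i - v θ₁ i) - (u θ₂ i - v θ₂ i)) / 2 := by ring
    have heq2 : |u θ₁ i - v θ₁ i| / 2 - |u θ₂ i - v θ₂ i| / 2
        = (|u θ₁ i - v θ₁ i| - |u θ₂ i - v θ₂ i|) / 2 := by ring
    rw [heq, heq2, abs_div, abs_div]
    simp only [abs_two]
    gcongr
  have step5 : Es D ≤ Es u / 2 + Es (fun θ i => -(v θ i)) / 2 :=
    Es_half_add u (fun θ i => -(v θ i)) C hC0 hu hvb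
  have step6 : Es (fun θ i => -(v θ i)) = Es v := Es_neg v
  linarith
end core3

section core4
variable {n : ℕ} {ι : Type*} [Nonempty ι]

lemma abs_inf'_le {α : Type*} {t : Finset α} (ht : t.Nonempty) (g : α → ℝ) {C : ℝ}
    (hg : ∀ a ∈ t, |g a| ≤ C) : |t.inf' ht g| ≤ C := by
  rw [abs_le]
  obtain ⟨a0, ha0, hval⟩ := Finset.exists_mem_eq_inf' ht g
  constructor
  · refine Finset.le_inf' ht g fun a ha => ?_
    exact (abs_le.1 (hg a ha)).1
  · rw [hval]
    exact (abs_le.1 (hg a0 ha0)).2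

lemma Es_inf' {α : Type*} (t : Finset α) (ht : t.Nonempty) (g : α → ι → Fin n → ℝ)
    (C : ℝ) (hC0 : 0 ≤ C) (hg : ∀ a θ i, |g a θ i| ≤ C) :
    Es (fun θ i => t.inf' ht (fun a => g a θ i)) ≤ ∑ a ∈ t, Es (g a) := by
  classical
  induction ht using Finset.Nonempty.cons_induction with
  | singleton a =>
      simp only [Finset.inf'_singleton, Finset.sum_singleton]
      exact le_of_eq rfl
  | cons a t hat hte ih =>
      have hinf : (fun θ : ι => fun i => (Finset.cons a t hat).inf' (Finset.cons_nonempty hat) (fun b => g b θ i))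
          = fun θ i => min (g a θ i) (t.inf' hte (fun b => g b θ i)) := by
        funext θ i
        rw [Finset.inf'_cons]
      rw [hinf]
      have hib : ∀ θ i, |t.inf' hte (fun b => g b θ i)| ≤ C := fun θ i =>
        abs_inf'_le hte _ fun b _ => hg b θ i
      calc Es (fun θ i => min (g a θ i) (t.inf' hte (fun b => g b θ i)))
          ≤ Es (g a) + Es (fun θ i => t.inf' hte (fun b => g b θ i)) :=
            Es_min _ _ C hC0 (fun θ i => hg a θ i) hib
        _ ≤ Es (g a) + ∑ b ∈ t, Es (g b) := by linarith [ih]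
        _ = ∑ b ∈ Finset.cons a t hat, Es (g b) := by rw [Finset.sum_cons]
end core4

section core5

lemma Es_linear {n d : ℕ} (hn : 0 < n) (hd : 0 < d) (B : ℝ) (hB : 0 ≤ B)
    (c : Fin n → Fin d → ℝ) (hc : ∀ i j, |c i j| ≤ 1) :
    haveI : Nonempty {θ : Fin d → ℝ // ∑ j, |θ j| ≤ B} := ⟨⟨0, by simp [hB]⟩⟩
    Es (fun (θ : {θ : Fin d → ℝ // ∑ j, |θ j| ≤ B}) i => ∑ j, c i j * θ.1 j)
      ≤ 2 ^ n * (B * Real.sqrt (2 * n * Real.log (2 * d))) := by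
  haveI : Nonempty {θ : Fin d → ℝ // ∑ j, |θ j| ≤ B} := ⟨⟨0, by simp [hB]⟩⟩
  haveI : Nonempty (Fin d) := ⟨⟨0, hd⟩⟩
  set L := Real.log (2 * d) with hLdef
  have hd1 : (1:ℝ) ≤ (d:ℝ) := by exact_mod_cast hd
  have hn1 : (1:ℝ) ≤ (n:ℝ) := by exact_mod_cast hn
  have hL0 : 0 < L := Real.log_pos (by linarith)
  set r := Real.sqrt (2 * n * L) with hrdef
  have h2nL : (0:ℝ) < 2 * n * L := by nlinarith
  have hr0 : 0 < r := Real.sqrt_pos.2 h2nL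
  have hr2 : r ^ 2 = 2 * n * L := Real.sq_sqrt h2nL.le
  set lam := r / n with hlamdef
  have hlam0 : 0 < lam := div_pos hr0 (by linarith)
  have hlamsq : (n:ℝ) * lam ^ 2 / 2 = L := by
    rw [hlamdef, div_pow, hr2]
    field_simp
  -- the random linear functionals
  set w : Fin d → (Fin n → ℝ) → ℝ := fun j ε => ∑ i, ε i * c i j with hwdef
  set Mx : (Fin n → ℝ) → ℝ := fun ε => Finset.univ.sup' Finset.univ_nonempty (fun j => |w j ε|)
    with hMxdef
  have hMx0 : ∀ ε, 0 ≤ Mx ε := fun ε =>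
    le_trans (abs_nonneg _) (Finset.le_sup' (fun j => |w j ε|) (Finset.mem_univ (Classical.arbitrary (Fin d))))
  -- Step A : pointwise duality bound
  have stepA : ∀ ε : Fin n → ℝ,
      (⨆ θ : {θ : Fin d → ℝ // ∑ j, |θ j| ≤ B}, ∑ i, ε i * ∑ j, c i j * θ.1 j)
        ≤ B * Mx ε := by
    intro ε
    refine ciSup_le fun θ => ?_
    have hswap : ∑ i, ε i * ∑ j, c i j * θ.1 j = ∑ j, θ.1 j * w j ε := by
      simp_rw [Finset.mul_sum]
      rw [Finset.sum_comm]
      refine Finset.sum_congr rfl fun j _ => ?_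
      rw [Finset.mul_sum]
      refine Finset.sum_congr rfl fun i _ => by ring
    rw [hswap]
    calc ∑ j, θ.1 j * w j ε ≤ ∑ j, |θ.1 j| * Mx ε := by
          refine Finset.sum_le_sum fun j _ => ?_
          calc θ.1 j * w j ε ≤ |θ.1 j * w j ε| := le_abs_self _
            _ = |θ.1 j| * |w j ε| := abs_mul _ _
            _ ≤ |θ.1 j| * Mx ε := by
                refine mul_le_mul_of_nonneg_left ?_ (abs_nonneg _)
                exact Finset.le_sup' (fun j => |w j ε|) (Finset.mem_univ j)
      _ = (∑ j, |θ.1 j|) * Mx ε := by rw [Finset.sum_mul]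
      _ ≤ B * Mx ε := mul_le_mul_of_nonneg_right θ.2 (hMx0 ε)
  -- Step B : maximal inequality
  set Z : (Fin n → ℝ) → ℝ := fun ε =>
    ∑ j, (Real.exp (lam * w j ε) + Real.exp (-(lam * w j ε))) with hZdef
  have hZ0 : ∀ ε, 0 < Z ε := by
    intro ε
    refine Finset.sum_pos (fun j _ => by positivity) Finset.univ_nonempty
  have hMxZ : ∀ ε, Mx ε ≤ Real.log (Z ε) / lam := by
    intro ε
    obtain ⟨j0, _, hj0⟩ := Finset.exists_mem_eq_sup' (Finset.univ_nonempty) (fun j => |w j ε|)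
    have hexp : Real.exp (lam * Mx ε) ≤ Z ε := by
      have h1 : Real.exp (lam * |w j0 ε|)
          ≤ Real.exp (lam * w j0 ε) + Real.exp (-(lam * w j0 ε)) := by
        rcases abs_cases (w j0 ε) with ⟨h, _⟩ | ⟨h, _⟩
        · rw [h]; exact le_add_of_nonneg_right (Real.exp_pos _).le
        · rw [h, mul_neg]
          exact le_add_of_nonneg_left (Real.exp_pos _).le
      have h2 : Real.exp (lam * w j0 ε) + Real.exp (-(lam * w j0 ε)) ≤ Z ε := by
        rw [hZdef]
        exact Finset.single_le_sum (f := fun j => Real.exp (lam * w j ε) + Real.exp (-(lam * w j ε)))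
          (fun j _ => by positivity) (Finset.mem_univ j0)
      have hMxeq : Mx ε = |w j0 ε| := hj0
      rw [hMxeq]
      exact h1.trans h2
    have hlog := Real.log_le_log (Real.exp_pos _) hexp
    rw [Real.log_exp] at hlog
    rw [le_div_iff₀ hlam0]
    calc Mx ε * lam = lam * Mx ε := mul_comm _ _
      _ ≤ Real.log (Z ε) := hlog
  set cst := 2 * (d:ℝ) * Real.exp (n * lam ^ 2 / 2) with hcstdef
  have hcst0 : 0 < cst := by positivity
  have hlogcst : Real.log cst = 2 * L := by
    rw [hcstdef, Real.log_mul (by positivity) (Real.exp_ne_zero _), Real.log_exp, hlamsq, hLdef]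
    ring
  -- mgf bound
  have hmgf : ∑ s : Fin n → Bool, Z (fun i => sgn (s i)) ≤ 2 ^ n * cst := by
    rw [hZdef]
    rw [Finset.sum_comm]
    have hterm : ∀ (ρ : ℝ), |ρ| = 1 → ∀ j : Fin d,
        ∑ s : Fin n → Bool, Real.exp (ρ * lam * w j (fun i => sgn (s i)))
          ≤ 2 ^ n * Real.exp (n * lam ^ 2 / 2) := by
      intro ρ hρ j
      have hrw : ∀ s : Fin n → Bool,
          Real.exp (ρ * lam * w j (fun i => sgn (s i)))
            = ∏ i, Real.exp (ρ * lam * (sgn (s i) * c i j)) := by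
        intro s
        rw [← Real.exp_sum]
        congr 1
        rw [hwdef, Finset.mul_sum]
      simp_rw [hrw]
      have hps := Finset.prod_univ_sum (fun _ : Fin n => (Finset.univ : Finset Bool))
        (fun i b => Real.exp (ρ * lam * (sgn b * c i j)))
      rw [Fintype.piFinset_univ] at hps
      rw [← hps]
      calc ∏ i, ∑ b : Bool, Real.exp (ρ * lam * (sgn b * c i j))
          ≤ ∏ _i : Fin n, 2 * Real.exp (lam ^ 2 / 2) := by
            refine Finset.prod_le_prod (fun i _ => Finset.sum_nonneg fun b _ => (Real.exp_pos _).le)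
              fun i _ => ?_
            rw [Fintype.sum_bool]
            have hsgt : sgn true = 1 := rfl
            have hsgf : sgn false = -1 := rfl
            rw [hsgt, hsgf]
            have hch : Real.exp (ρ * lam * (1 * c i j)) + Real.exp (ρ * lam * (-1 * c i j))
                = 2 * Real.cosh (ρ * lam * c i j) := by
              rw [Real.cosh_eq]
              ring_nf
            rw [hch]
            have h1 : Real.cosh (ρ * lam * c i j) ≤ Real.exp ((ρ * lam * c i j) ^ 2 / 2) :=
              Real.cosh_le_exp_half_sq _
            have h2 : (ρ * lam * c i j) ^ 2 / 2 ≤ lam ^ 2 / 2 := by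
              have : (ρ * lam * c i j) ^ 2 ≤ lam ^ 2 := by
                have hc1 := hc i j
                have h3 : |ρ * lam * c i j| ≤ lam := by
                  rw [abs_mul, abs_mul, hρ, one_mul, abs_of_pos hlam0]
                  nlinarith [abs_nonneg (c i j)]
                calc (ρ * lam * c i j) ^ 2 = |ρ * lam * c i j| ^ 2 := (sq_abs _).symm
                  _ ≤ lam ^ 2 := by nlinarith [abs_nonneg (ρ * lam * c i j)]
              linarith
            have := (h1.trans (Real.exp_le_exp.2 h2))
            linarith [this]
        _ = 2 ^ n * Real.exp ((n:ℝ) * lam ^ 2 / 2) := by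
            rw [Finset.prod_const, Finset.card_univ, Fintype.card_fin, mul_pow,
              ← Real.exp_nat_mul]
            congr 2
            ring
    have hplus := fun j => hterm 1 (by norm_num) j
    have hminus := fun j => hterm (-1) (by norm_num) j
    calc ∑ j : Fin d, ∑ s : Fin n → Bool,
          (Real.exp (lam * w j (fun i => sgn (s i))) + Real.exp (-(lam * w j (fun i => sgn (s i)))))
        ≤ ∑ _j : Fin d, (2 ^ n * Real.exp (n * lam ^ 2 / 2) + 2 ^ n * Real.exp (n * lam ^ 2 / 2)) := by
          refine Finset.sum_le_sum fun j _ => ?_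
          rw [Finset.sum_add_distrib]
          have h1 := hplus j
          have h2 := hminus j
          simp only [one_mul, neg_one_mul, neg_mul] at h1 h2 ⊢
          exact add_le_add h1 h2
      _ = 2 ^ n * cst := by
          rw [Finset.sum_const, Finset.card_univ, Fintype.card_fin, nsmul_eq_mul, hcstdef]
          ring
  -- tangent line trick
  have hlogZ : ∑ s : Fin n → Bool, Real.log (Z (fun i => sgn (s i))) ≤ 2 ^ n * Real.log cst := by
    have htan : ∀ ε : Fin n → ℝ, Real.log (Z ε) ≤ Z ε / cst - 1 + Real.log cst := by
      intro ε
      have h1 := Real.log_le_sub_one_of_pos (div_pos (hZ0 ε) hcst0)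
      rw [Real.log_div (hZ0 ε).ne' hcst0.ne'] at h1
      linarith
    calc ∑ s : Fin n → Bool, Real.log (Z (fun i => sgn (s i)))
        ≤ ∑ s : Fin n → Bool, (Z (fun i => sgn (s i)) / cst - 1 + Real.log cst) :=
          Finset.sum_le_sum fun s _ => htan _
      _ = (∑ s : Fin n → Bool, Z (fun i => sgn (s i))) / cst - 2 ^ n + 2 ^ n * Real.log cst := by
          rw [Finset.sum_add_distrib, Finset.sum_sub_distrib, ← Finset.sum_div]
          simp [Finset.card_univ]
      _ ≤ 2 ^ n * cst / cst - 2 ^ n + 2 ^ n * Real.log cst := by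
          have h2 : (∑ s : Fin n → Bool, Z (fun i => sgn (s i))) / cst ≤ 2 ^ n * cst / cst :=
            (div_le_div_iff_of_pos_right hcst0).2 hmgf
          linarith
      _ = 2 ^ n * Real.log cst := by
          field_simp
          ring
  -- combine step B
  have stepB : ∑ s : Fin n → Bool, Mx (fun i => sgn (s i)) ≤ 2 ^ n * r := by
    calc ∑ s : Fin n → Bool, Mx (fun i => sgn (s i))
        ≤ ∑ s : Fin n → Bool, Real.log (Z (fun i => sgn (s i))) / lam :=
          Finset.sum_le_sum fun s _ => hMxZ _
      _ = (∑ s : Fin n → Bool, Real.log (Z (fun i => sgn (s i)))) / lam := by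
          rw [Finset.sum_div]
      _ ≤ 2 ^ n * Real.log cst / lam :=
          (div_le_div_iff_of_pos_right hlam0).2 hlogZ
      _ = 2 ^ n * r := by
          have hrr := hr2
          rw [pow_two] at hrr
          rw [hlogcst, hlamdef, div_div_eq_mul_div, div_eq_iff hr0.ne']
          linear_combination (-((2:ℝ) ^ n)) * hrr
  -- step C : conclude
  unfold Es
  calc ∑ s : Fin n → Bool,
        ⨆ θ : {θ : Fin d → ℝ // ∑ j, |θ j| ≤ B}, ∑ i, sgn (s i) * ∑ j, c i j * θ.1 j
      ≤ ∑ s : Fin n → Bool, B * Mx (fun i => sgn (s i)) :=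
        Finset.sum_le_sum fun s _ => stepA _
    _ = B * ∑ s : Fin n → Bool, Mx (fun i => sgn (s i)) := by rw [Finset.mul_sum]
    _ ≤ B * (2 ^ n * r) := mul_le_mul_of_nonneg_left stepB hB
    _ = 2 ^ n * (B * r) := by ring
end core5

section glue

lemma abs_min_zero_le (z : ℝ) : |min 0 z| ≤ |z| := by
  rcases le_total z 0 with h | h
  · rw [min_eq_right h]
  · rw [min_eq_left h, abs_zero]; exact abs_nonneg _

lemma min_zero_lip (x y : ℝ) : |min 0 x - min 0 y| ≤ |x - y| := by
  rcases le_total x 0 with hx | hx <;> rcases le_total y 0 with hy | hy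
  · rw [min_eq_right hx, min_eq_right hy]
  · rw [min_eq_right hx, min_eq_left hy, sub_zero, abs_of_nonpos hx,
      abs_of_nonpos (by linarith : x - y ≤ 0)]
    linarith
  · rw [min_eq_left hx, min_eq_right hy, zero_sub, abs_neg, abs_of_nonpos hy,
      abs_of_nonneg (by linarith : 0 ≤ x - y)]
    linarith
  · rw [min_eq_left hx, min_eq_left hy, sub_zero, abs_zero]
    exact abs_nonneg _

lemma ciInf_eq_inf' {A : ℕ} [Nonempty (Fin A)] (g : Fin A → ℝ) :
    (⨅ a, g a) = Finset.univ.inf' Finset.univ_nonempty g := by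
  apply le_antisymm
  · exact Finset.le_inf' _ _ fun a _ => ciInf_le (Set.finite_range g).bddBelow a
  · exact le_ciInf fun a => Finset.inf'_le g (Finset.mem_univ a)

end glue


/-- The empirical Rademacher complexity `R_n(F; x₁,…,x_n)` of a class `F` of real-valued
functions on `𝒳` with respect to the sample `x : Fin n → 𝒳`. -/
def radComp {𝒳 : Type*} (n : ℕ) (F : Set (𝒳 → ℝ)) (x : Fin n → 𝒳) : ℝ :=
  (1 / (n : ℝ)) * ∫ ε : Fin n → ℝ, (⨆ f : F, ∑ i, ε i * f.1 (x i)) ∂signPi n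

/-- `d × A` real matrices all of whose columns have ℓ_∞ norm at most 1 (columns indexed
by `Fin A`). -/
abbrev MatBall (d A : ℕ) : Type := {X : Fin A → Fin d → ℝ // ∀ a i, |X a i| ≤ 1}

/-- The class `ℱ_{d,B}` of functions `X ↦ min{0, min_a ⟨X_a, θ⟩}` for `‖θ‖₁ ≤ B`. -/
def minLinClass (d A : ℕ) (B : ℝ) : Set (MatBall d A → ℝ) :=
  {h | ∃ θ : Fin d → ℝ, (∑ i, |θ i| ≤ B) ∧
    h = fun X => min 0 (⨅ a : Fin A, ∑ i, X.1 a i * θ i)}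

/-- the Rademacher complexity of the class of clipped minima of `A` linear
functionals with a shared ℓ₁-bounded weight vector satisfies
`R_n(ℱ_{d,B}) ≤ A B √(π log(2d)/n)`. -/
theorem stmt_10 (d A n : ℕ) (B : ℝ) (hB : 0 < B) :
    (⨆ x : Fin n → MatBall d A, radComp n (minLinClass d A B) x) ≤
      (A : ℝ) * B * Real.sqrt (Real.pi * Real.log (2 * (d : ℝ)) / (n : ℝ)) := by
  have hRHS0 : (0:ℝ) ≤ (A : ℝ) * B * Real.sqrt (Real.pi * Real.log (2 * (d : ℝ)) / (n : ℝ)) := by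
    positivity
  haveI : Nonempty (MatBall d A) := ⟨⟨0, fun a i => by simp⟩⟩
  haveI : Nonempty (Fin n → MatBall d A) := inferInstance
  refine ciSup_le fun x => ?_
  -- the class is nonempty
  haveI hFne : Nonempty (minLinClass d A B) := by
    refine ⟨⟨fun X => min 0 (⨅ a : Fin A, ∑ i, X.1 a i * (0:ℝ)), 0, ?_, rfl⟩⟩
    simp [hB.le]
  rw [radComp, integral_signPi n (fun ε => ⨆ f : minLinClass d A B, ∑ i, ε i * f.1 (x i))]
  -- trivial case n = 0
  rcases Nat.eq_zero_or_pos n with hn | hn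
  · subst hn
    rw [Nat.cast_zero, div_zero, zero_mul]
    exact_mod_cast hRHS0
  -- trivial case A = 0
  rcases Nat.eq_zero_or_pos A with hA | hA
  · subst hA
    have hzero : ∀ s : Fin n → Bool,
        (⨆ f : minLinClass d 0 B, ∑ i, sgn (s i) * f.1 (x i)) = 0 := by
      intro s
      have h0 : (fun f : minLinClass d 0 B => ∑ i, sgn (s i) * f.1 (x i))
          = fun _ => (0:ℝ) := by
        funext f
        obtain ⟨θ, hθ, hfe⟩ := f.2
        simp [hfe, Real.iInf_of_isEmpty]
      rw [h0, ciSup_const]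
    rw [Finset.sum_eq_zero fun s _ => hzero s, mul_zero, mul_zero]
    exact hRHS0
  haveI : Nonempty (Fin A) := ⟨⟨0, hA⟩⟩
  -- trivial case d = 0
  rcases Nat.eq_zero_or_pos d with hd | hd
  · subst hd
    have hzero : ∀ s : Fin n → Bool,
        (⨆ f : minLinClass 0 A B, ∑ i, sgn (s i) * f.1 (x i)) = 0 := by
      intro s
      have h0 : (fun f : minLinClass 0 A B => ∑ i, sgn (s i) * f.1 (x i))
          = fun _ => (0:ℝ) := by
        funext f
        obtain ⟨θ, hθ, hfe⟩ := f.2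
        simp [hfe, ciInf_const]
      rw [h0, ciSup_const]
    rw [Finset.sum_eq_zero fun s _ => hzero s, mul_zero, mul_zero]
    exact hRHS0
  -- main case
  haveI hTne : Nonempty {θ : Fin d → ℝ // ∑ j, |θ j| ≤ B} := ⟨⟨0, by simp [hB.le]⟩⟩
  set T := {θ : Fin d → ℝ // ∑ j, |θ j| ≤ B} with hT
  set lin : Fin A → T → Fin n → ℝ := fun a θ i => ∑ j, (x i).1 a j * θ.1 j with hlin
  set v : T → Fin n → ℝ := fun θ i => Finset.univ.inf' Finset.univ_nonempty (fun a => lin a θ i)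
    with hv
  set w : T → Fin n → ℝ := fun θ i => min 0 (v θ i) with hw
  have hlinb : ∀ a θ i, |lin a θ i| ≤ B := by
    intro a θ i
    rw [hlin]
    calc |∑ j, (x i).1 a j * θ.1 j| ≤ ∑ j, |(x i).1 a j * θ.1 j| :=
          Finset.abs_sum_le_sum_abs _ _
      _ ≤ ∑ j, |θ.1 j| := by
          refine Finset.sum_le_sum fun j _ => ?_
          rw [abs_mul]
          have h1 := (x i).2 a j
          have h2 := abs_nonneg (θ.1 j)
          nlinarith
      _ ≤ B := θ.2
  have hvb : ∀ θ i, |v θ i| ≤ B := fun θ i =>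
    abs_inf'_le _ _ fun a _ => hlinb a θ i
  have hwb : ∀ θ i, |w θ i| ≤ B := fun θ i => (abs_min_zero_le _).trans (hvb θ i)
  have hrange : ∀ s : Fin n → Bool,
      (⨆ f : minLinClass d A B, ∑ i, sgn (s i) * f.1 (x i))
        = ⨆ θ : T, ∑ i, sgn (s i) * w θ i := by
    intro s
    have hR : Set.range (fun f : minLinClass d A B => ∑ i, sgn (s i) * f.1 (x i))
        = Set.range (fun θ : T => ∑ i, sgn (s i) * w θ i) := by
      ext z
      constructor
      · rintro ⟨f, rfl⟩
        obtain ⟨θ, hθB, hfe⟩ := f.2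
        refine ⟨⟨θ, hθB⟩, ?_⟩
        simp only [hw, hv, hlin, hfe]
        refine (Finset.sum_congr rfl fun i _ => ?_).symm
        rw [ciInf_eq_inf']
      · rintro ⟨θ, rfl⟩
        refine ⟨⟨fun X => min 0 (⨅ a : Fin A, ∑ j, X.1 a j * θ.1 j), θ.1, θ.2, rfl⟩, ?_⟩
        simp only [hw, hv, hlin]
        refine Finset.sum_congr rfl fun i _ => ?_
        rw [ciInf_eq_inf']
    rw [iSup, iSup, hR]
  simp_rw [hrange]
  have hEs : ∑ s : Fin n → Bool, (⨆ θ : T, ∑ i, sgn (s i) * w θ i) = Es w := rfl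
  rw [hEs]
  have h1 : Es w ≤ Es v :=
    contraction w v B hB.le hwb hvb (fun i θ₁ θ₂ => min_zero_lip _ _)
  have h2 : Es v ≤ ∑ a : Fin A, Es (lin a) :=
    Es_inf' Finset.univ Finset.univ_nonempty lin B hB.le hlinb
  set r2 := Real.sqrt (2 * n * Real.log (2 * d)) with hr2def
  have h3 : ∀ a : Fin A, Es (lin a) ≤ 2 ^ n * (B * r2) := fun a =>
    Es_linear hn hd B hB.le (fun i j => (x i).1 a j) (fun i j => (x i).2 a j)
  have h4 : Es w ≤ (A:ℝ) * (2 ^ n * (B * r2)) := by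
    calc Es w ≤ ∑ a : Fin A, Es (lin a) := h1.trans h2
      _ ≤ ∑ _a : Fin A, 2 ^ n * (B * r2) := Finset.sum_le_sum fun a _ => h3 a
      _ = (A:ℝ) * (2 ^ n * (B * r2)) := by
          rw [Finset.sum_const, Finset.card_univ, Fintype.card_fin, nsmul_eq_mul]
  have hn0 : (0:ℝ) < n := by exact_mod_cast hn
  have hd1 : (1:ℝ) ≤ (d:ℝ) := by exact_mod_cast hd
  have hL0 : (0:ℝ) ≤ Real.log (2 * d) := Real.log_nonneg (by linarith)
  have h2n : (0:ℝ) < (2:ℝ) ^ n := by positivity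
  calc (1 / (n:ℝ)) * (((2:ℝ) ^ n)⁻¹ * Es w)
      ≤ (1 / (n:ℝ)) * (((2:ℝ) ^ n)⁻¹ * ((A:ℝ) * (2 ^ n * (B * r2)))) := by gcongr
    _ = (A:ℝ) * B * (r2 / n) := by field_simp
    _ = (A:ℝ) * B * Real.sqrt (2 * Real.log (2 * d) / n) := by
        have hdiv : 2 * Real.log (2 * (d:ℝ)) / (n:ℝ)
            = (2 * n * Real.log (2 * d)) / (n:ℝ) ^ 2 := by
          field_simp
        rw [hdiv, Real.sqrt_div (by positivity), Real.sqrt_sq hn0.le, hr2def]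
    _ ≤ (A:ℝ) * B * Real.sqrt (Real.pi * Real.log (2 * d) / n) := by
        have hAB : (0:ℝ) ≤ (A:ℝ) * B := by positivity
        refine mul_le_mul_of_nonneg_left (Real.sqrt_le_sqrt ?_) hAB
        have hpi := Real.two_le_pi
        gcongr
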